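/- Let p ∈ (0,1), let (Ω, μ) be a probability space, and let X : Ω → ℕ be a random variable distributed geometrically with parameter p, i.e. μ{X = k} = p·(1−p)^k for every k ∈ ℕ. Let a : ℕ → ℝ satisfy ∑_{t=0}^∞ |a t| < ∞. Then the random variable ω ↦ ∑_{t=0}^{X ω} a t · (1−p)^{−t} is integrable and its expectation equals ∑_{t=0}^∞ a t. -/

import Mathlib

open MeasureTheory ENNReal

/-- The geometrically randomly-stopped, tail-reweighted estimator of an absolutely
convergent series is integrable and unbiased. -/
theorem geometric_randomly_stopped_unbiased {Ω : Type*} [MeasurableSpace Ω]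
    (μ : Measure Ω) [IsProbabilityMeasure μ]
    (p : ℝ) (hp0 : 0 < p) (hp1 : p < 1)
    (X : Ω → ℕ) (hX : Measurable X)
    (hgeom : ∀ k : ℕ, μ {ω | X ω = k} = ENNReal.ofReal (p * (1 - p) ^ k))
    (a : ℕ → ℝ) (ha : Summable (fun t => |a t|)) :
    Integrable (fun ω => ∑ t ∈ Finset.range (X ω + 1), a t * ((1 - p) ^ t)⁻¹) μ ∧
      ∫ ω, (∑ t ∈ Finset.range (X ω + 1), a t * ((1 - p) ^ t)⁻¹) ∂μ = ∑' t : ℕ, a t := by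
  set q : ℝ := 1 - p with hq
  have hq0 : 0 < q := by simp only [hq]; linarith
  have hq1 : q < 1 := by simp only [hq]; linarith
  have hqt : ∀ t : ℕ, (0:ℝ) < q ^ t := fun t => pow_pos hq0 t
  -- tail probability
  have hsmeas : ∀ t : ℕ, MeasurableSet {ω | t ≤ X ω} := by
    intro t
    exact hX (measurableSet_Ici (a := t))
  have htail : ∀ t : ℕ, μ {ω | t ≤ X ω} = ENNReal.ofReal (q ^ t) := by
    intro t
    have hset : {ω | t ≤ X ω} = ⋃ k : ℕ, {ω | X ω = t + k} := by
      ext ω; simp [le_iff_exists_add]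
    have hdisj : Pairwise (Function.onFun Disjoint fun k : ℕ => {ω | X ω = t + k}) := by
      intro i j hij
      refine Set.disjoint_left.mpr fun ω hi hj => hij ?_
      have : t + i = t + j := by rw [← hi, ← hj]
      omega
    have hmeask : ∀ k : ℕ, MeasurableSet {ω | X ω = t + k} := fun k =>
      hX (measurableSet_singleton (t + k))
    rw [hset, measure_iUnion hdisj hmeask]
    have hsum : Summable (fun k : ℕ => p * q ^ t * q ^ k) :=
      (summable_geometric_of_lt_one hq0.le hq1).mul_left _
    calc ∑' k : ℕ, μ {ω | X ω = t + k}
        = ∑' k : ℕ, ENNReal.ofReal (p * q ^ t * q ^ k) := by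
          simp_rw [hgeom, pow_add, mul_assoc]
      _ = ENNReal.ofReal (∑' k : ℕ, p * q ^ t * q ^ k) := by
          rw [ENNReal.ofReal_tsum_of_nonneg
            (fun k => by positivity) hsum]
      _ = ENNReal.ofReal (q ^ t) := by
          rw [tsum_mul_left, tsum_geometric_of_lt_one hq0.le hq1]
          congr 1
          have : 1 - q = p := by simp [hq]
          rw [this]
          field_simp
  -- the summands as indicator functions
  set f : ℕ → Ω → ℝ := fun t => Set.indicator {ω | t ≤ X ω} (fun _ => a t * (q ^ t)⁻¹) with hf
  have hpt : ∀ ω, ∑ t ∈ Finset.range (X ω + 1), a t * (q ^ t)⁻¹ = ∑' t, f t ω := by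
    intro ω
    simp only [hf]
    symm
    refine (tsum_eq_sum (s := Finset.range (X ω + 1)) ?_).trans (Finset.sum_congr rfl ?_)
    · intro t ht
      exact Set.indicator_of_notMem (by simpa using Finset.mem_range.not.mp ht) _
    · intro t ht
      exact Set.indicator_of_mem
        (by simpa using Nat.lt_succ_iff.mp (Finset.mem_range.mp ht)) _
  have hint : ∀ t : ℕ, Integrable (f t) μ :=
    fun t => (integrable_const _).indicator (hsmeas t)
  have hintegral : ∀ t : ℕ, ∫ ω, f t ω ∂μ = a t := by
    intro t
    rw [integral_indicator_const _ (hsmeas t), measureReal_def, htail t, ENNReal.toReal_ofReal (hqt t).le,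
      smul_eq_mul]
    field_simp
  have hnorm : ∀ t : ℕ, ∫ ω, ‖f t ω‖ ∂μ = |a t| := by
    intro t
    have : (fun ω => ‖f t ω‖) =
        Set.indicator {ω | t ≤ X ω} (fun _ => ‖a t * (q ^ t)⁻¹‖) := by
      funext ω
      rw [← norm_indicator_eq_indicator_norm]
    rw [this, integral_indicator_const _ (hsmeas t), measureReal_def, htail t,
      ENNReal.toReal_ofReal (hqt t).le, smul_eq_mul, Real.norm_eq_abs, abs_mul,
      abs_inv, abs_of_pos (hqt t)]
    field_simp [mul_comm]
  have hnormsum : Summable fun t => ∫ ω, ‖f t ω‖ ∂μ := by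
    simp_rw [hnorm]; exact ha
  -- integrability
  have hmeasF : Measurable (fun ω => ∑ t ∈ Finset.range (X ω + 1), a t * (q ^ t)⁻¹) :=
    (measurable_from_top
      (f := fun k : ℕ => ∑ t ∈ Finset.range (k + 1), a t * (q ^ t)⁻¹)).comp hX
  have hIntF : Integrable (fun ω => ∑ t ∈ Finset.range (X ω + 1), a t * (q ^ t)⁻¹) μ := by
    refine ⟨hmeasF.aestronglyMeasurable, ?_⟩
    have hbound : ∀ ω, (‖∑ t ∈ Finset.range (X ω + 1), a t * (q ^ t)⁻¹‖₊ : ℝ≥0∞)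
        ≤ ∑' t : ℕ, (‖f t ω‖₊ : ℝ≥0∞) := by
      intro ω
      calc (‖∑ t ∈ Finset.range (X ω + 1), a t * (q ^ t)⁻¹‖₊ : ℝ≥0∞)
          ≤ ∑ t ∈ Finset.range (X ω + 1), (‖a t * (q ^ t)⁻¹‖₊ : ℝ≥0∞) := by
            rw [← ENNReal.coe_finset_sum]
            exact_mod_cast nnnorm_sum_le _ _
        _ = ∑ t ∈ Finset.range (X ω + 1), (‖f t ω‖₊ : ℝ≥0∞) := by
            refine Finset.sum_congr rfl fun t ht => ?_
            simp only [hf]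
            rw [Set.indicator_of_mem
              (by simpa using Nat.lt_succ_iff.mp (Finset.mem_range.mp ht)) _]
        _ ≤ ∑' t : ℕ, (‖f t ω‖₊ : ℝ≥0∞) := ENNReal.sum_le_tsum _
    have hlintf : ∀ t : ℕ, ∫⁻ ω, (‖f t ω‖₊ : ℝ≥0∞) ∂μ = ENNReal.ofReal |a t| := by
      intro t
      have heq : (fun ω => (‖f t ω‖₊ : ℝ≥0∞)) =
          Set.indicator {ω | t ≤ X ω} (fun _ => (‖a t * (q ^ t)⁻¹‖₊ : ℝ≥0∞)) := by
        funext ω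
        simp only [hf]
        by_cases hω : ω ∈ {ω | t ≤ X ω}
        · rw [Set.indicator_of_mem hω, Set.indicator_of_mem hω]
        · rw [Set.indicator_of_notMem hω, Set.indicator_of_notMem hω]; simp
      rw [heq, lintegral_indicator_const (hsmeas t), htail t,
        ← enorm_eq_nnnorm, ← ofReal_norm, ← ENNReal.ofReal_mul (norm_nonneg _)]
      congr 1
      rw [Real.norm_eq_abs, abs_mul, abs_inv, abs_of_pos (hqt t)]
      field_simp
    calc ∫⁻ ω, (‖∑ t ∈ Finset.range (X ω + 1), a t * (q ^ t)⁻¹‖₊ : ℝ≥0∞) ∂μ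
        ≤ ∫⁻ ω, ∑' t : ℕ, (‖f t ω‖₊ : ℝ≥0∞) ∂μ := lintegral_mono hbound
      _ = ∑' t : ℕ, ∫⁻ ω, (‖f t ω‖₊ : ℝ≥0∞) ∂μ := lintegral_tsum fun t =>
          ((hint t).aestronglyMeasurable.aemeasurable.nnnorm.coe_nnreal_ennreal)
      _ = ∑' t : ℕ, ENNReal.ofReal |a t| := by simp_rw [hlintf]
      _ = ENNReal.ofReal (∑' t, |a t|) :=
          (ENNReal.ofReal_tsum_of_nonneg (fun t => abs_nonneg _) ha).symm
      _ < ⊤ := ENNReal.ofReal_lt_top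
  refine ⟨hIntF, ?_⟩
  calc ∫ ω, (∑ t ∈ Finset.range (X ω + 1), a t * (q ^ t)⁻¹) ∂μ
      = ∫ ω, (∑' t, f t ω) ∂μ := by simp_rw [hpt]
    _ = ∑' t, ∫ ω, f t ω ∂μ :=
        (integral_tsum_of_summable_integral_norm hint hnormsum).symm
    _ = ∑' t, a t := by simp_rw [hintegral]
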